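/- Let p be a prime and E a finite subset of ℚ_p. Then #E ≤ p^{#I_E}, where I_E = {v_p(x − y) : x, y ∈ E, x ≠ y} is the (finite) set of admissible p-orders of E. -/

import Mathlib

noncomputable section

/-- The set of admissible `p`-orders of a set `E ⊆ ℚ_p`. -/
def pOrders (p : ℕ) [Fact p.Prime] (E : Set ℚ_[p]) : Set ℤ :=
  {n : ℤ | ∃ x ∈ E, ∃ y ∈ E, x ≠ y ∧ (x - y).valuation = n}

lemma pOrders_finite (p : ℕ) [Fact p.Prime] (E : Set ℚ_[p]) (hE : E.Finite) :
    (pOrders p E).Finite := by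
  have : pOrders p E ⊆ (fun q : ℚ_[p] × ℚ_[p] => (q.1 - q.2).valuation) '' (E ×ˢ E) := by
    rintro n ⟨x, hx, y, hy, _, h⟩
    exact ⟨(x, y), ⟨hx, hy⟩, h⟩
  exact ((hE.prod hE).image _).subset this

lemma pOrders_mono (p : ℕ) [Fact p.Prime] {E F : Set ℚ_[p]} (h : E ⊆ F) :
    pOrders p E ⊆ pOrders p F := by
  rintro n ⟨x, hx, y, hy, hxy, hv⟩
  exact ⟨x, h hx, y, h hy, hxy, hv⟩

/-- helper constructor into `ℤ_[p]`. -/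
def mkZ (p : ℕ) [Fact p.Prime] (q : ℚ_[p]) (h : ‖q‖ ≤ 1) : ℤ_[p] := ⟨q, h⟩

@[simp] lemma mkZ_coe (p : ℕ) [Fact p.Prime] (q : ℚ_[p]) (h : ‖q‖ ≤ 1) :
    ((mkZ p q h : ℤ_[p]) : ℚ_[p]) = q := rfl

@[simp] lemma mkZ_norm (p : ℕ) [Fact p.Prime] (q : ℚ_[p]) (h : ‖q‖ ≤ 1) :
    ‖(mkZ p q h : ℤ_[p])‖ = ‖q‖ := rfl

lemma main_aux (p : ℕ) [hp : Fact p.Prime] (n : ℕ) :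
    ∀ E : Set ℚ_[p], E.Finite → (pOrders p E).ncard ≤ n → E.ncard ≤ p ^ n := by
  induction n with
  | zero =>
    intro E hE hcard
    by_contra h
    push_neg at h
    simp only [pow_zero] at h
    obtain ⟨x, hx, y, hy, hxy⟩ := (Set.one_lt_ncard hE).mp h
    have hmem : (x - y).valuation ∈ pOrders p E := ⟨x, hx, y, hy, hxy, rfl⟩
    have : 0 < (pOrders p E).ncard :=
      Set.ncard_pos (pOrders_finite p E hE) |>.mpr ⟨_, hmem⟩
    omega
  | succ n ih =>
    intro E hE hcard
    by_cases h1 : E.ncard ≤ 1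
    · exact h1.trans (Nat.one_le_pow _ _ hp.out.pos)
    push_neg at h1
    obtain ⟨x₀, hx₀, y₀, hy₀, hxy₀⟩ := (Set.one_lt_ncard hE).mp h1
    have hPfin := pOrders_finite p E hE
    have hPne : ((pOrders_finite p E hE).toFinset).Nonempty := by
      rw [Set.Finite.toFinset_nonempty]
      exact ⟨_, x₀, hx₀, y₀, hy₀, hxy₀, rfl⟩
    set m : ℤ := (pOrders_finite p E hE).toFinset.min' hPne with hm
    have hmMem : m ∈ pOrders p E := by
      have := (pOrders_finite p E hE).toFinset.min'_mem hPne
      rwa [Set.Finite.mem_toFinset] at this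
    have hmin : ∀ k ∈ pOrders p E, m ≤ k := fun k hk =>
      (pOrders_finite p E hE).toFinset.min'_le k ((Set.Finite.mem_toFinset _).mpr hk)
    have hp1 : (1 : ℝ) ≤ (p : ℝ) := by exact_mod_cast hp.out.one_le
    have hpR : (0 : ℝ) < (p : ℝ) := by exact_mod_cast hp.out.pos
    set c : ℚ_[p] := (p : ℚ_[p]) ^ (-m) with hc
    have hcnorm : ‖c‖ = (p : ℝ) ^ m := by
      rw [hc, norm_zpow, Padic.norm_p, inv_zpow', neg_neg]
    -- norm bound for differences
    have hkey : ∀ x ∈ E, ∀ y ∈ E, ‖(x - y) * c‖ ≤ 1 := by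
      intro x hx y hy
      rcases eq_or_ne x y with rfl | hne
      · simp
      have hsub : x - y ≠ 0 := sub_ne_zero.mpr hne
      rw [norm_mul, hcnorm, Padic.norm_eq_zpow_neg_valuation hsub]
      have hv : m ≤ (x - y).valuation := hmin _ ⟨x, hx, y, hy, hne, rfl⟩
      calc (p : ℝ) ^ (-(x - y).valuation) * (p : ℝ) ^ m
          = (p : ℝ) ^ (m - (x - y).valuation) := by
            rw [← zpow_add₀ (ne_of_gt hpR)]; ring_nf
        _ ≤ (p : ℝ) ^ (0 : ℤ) := by
            apply zpow_le_zpow_right₀ hp1; omega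
        _ = 1 := zpow_zero _
    -- the residue map
    set g : ℚ_[p] → ZMod p := fun x =>
      if h : ‖(x - x₀) * c‖ ≤ 1 then PadicInt.toZMod (mkZ p ((x - x₀) * c) h) else 0
      with hg
    have hgE : ∀ x (hx : x ∈ E), g x =
        PadicInt.toZMod (mkZ p ((x - x₀) * c) (hkey x hx x₀ hx₀)) := by
      intro x hx
      rw [hg]
      exact dif_pos (hkey x hx x₀ hx₀)
    -- same fiber means valuation ≠ m
    have hfiber : ∀ x ∈ E, ∀ y ∈ E, x ≠ y → g x = g y → (x - y).valuation ≠ m := by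
      intro x hx y hy hne hgxy hvm
      have hsub : x - y ≠ 0 := sub_ne_zero.mpr hne
      have h1 : mkZ p ((x - x₀) * c) (hkey x hx x₀ hx₀) -
          mkZ p ((y - x₀) * c) (hkey y hy x₀ hx₀) = mkZ p ((x - y) * c) (hkey x hx y hy) := by
        apply Subtype.ext
        rw [PadicInt.coe_sub, mkZ_coe, mkZ_coe, mkZ_coe]
        ring
      have h2 : PadicInt.toZMod (mkZ p ((x - y) * c) (hkey x hx y hy)) = 0 := by
        rw [← h1, map_sub, ← hgE x hx, ← hgE y hy, hgxy, sub_self]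
      have h3 : mkZ p ((x - y) * c) (hkey x hx y hy) ∈
          IsLocalRing.maximalIdeal ℤ_[p] := by
        rw [← PadicInt.ker_toZMod]; exact h2
      have h4 : ‖(x - y) * c‖ < 1 := by
        have h4' := (IsLocalRing.mem_maximalIdeal _).mp h3
        rw [PadicInt.mem_nonunits] at h4'
        rwa [mkZ_norm] at h4'
      have h5 : ‖(x - y) * c‖ = 1 := by
        rw [norm_mul, hcnorm, Padic.norm_eq_zpow_neg_valuation hsub, hvm,
          ← zpow_add₀ (ne_of_gt hpR)]
        simp
      rw [h5] at h4
      exact lt_irrefl _ h4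
    -- counting
    classical
    set F : Finset ℚ_[p] := hE.toFinset with hF
    have hcount : F.card = ∑ r ∈ (Finset.univ : Finset (ZMod p)),
        (F.filter (fun x => g x = r)).card :=
      Finset.card_eq_sum_card_fiberwise (fun x _ => Finset.mem_univ _)
    have hEcard : E.ncard = F.card := Set.ncard_eq_toFinset_card E hE
    have hfib : ∀ r : ZMod p, (F.filter (fun x => g x = r)).card ≤ p ^ n := by
      intro r
      set Fr : Set ℚ_[p] := ↑(F.filter (fun x => g x = r)) with hFr
      have hFrE : Fr ⊆ E := by
        intro x hx
        rw [hFr] at hx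
        simp only [Finset.coe_filter, Set.mem_setOf_eq] at hx
        exact (hE.mem_toFinset).mp hx.1
      have hsub2 : pOrders p Fr ⊆ pOrders p E \ {m} := by
        rintro k ⟨x, hx, y, hy, hne, hv⟩
        constructor
        · exact ⟨x, hFrE hx, y, hFrE hy, hne, hv⟩
        · simp only [Set.mem_singleton_iff]
          intro hkm
          have hgx : g x = r := by
            rw [hFr] at hx; simp only [Finset.coe_filter, Set.mem_setOf_eq] at hx; exact hx.2
          have hgy : g y = r := by
            rw [hFr] at hy; simp only [Finset.coe_filter, Set.mem_setOf_eq] at hy; exact hy.2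
          exact hfiber x (hFrE hx) y (hFrE hy) hne (hgx.trans hgy.symm) (hv.trans hkm)
      have hcard2 : (pOrders p Fr).ncard ≤ n := by
        have h6 : (pOrders p Fr).ncard ≤ (pOrders p E \ {m}).ncard :=
          Set.ncard_le_ncard hsub2 (hPfin.subset Set.diff_subset)
        have h7 : (pOrders p E \ {m}).ncard = (pOrders p E).ncard - 1 :=
          Set.ncard_diff_singleton_of_mem hmMem
        omega
      have := ih Fr ((F.filter (fun x => g x = r)).finite_toSet) hcard2
      rwa [hFr, Set.ncard_coe_finset] at this
    calc E.ncard = F.card := hEcard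
      _ = ∑ r ∈ (Finset.univ : Finset (ZMod p)), (F.filter (fun x => g x = r)).card := hcount
      _ ≤ ∑ _r ∈ (Finset.univ : Finset (ZMod p)), p ^ n :=
          Finset.sum_le_sum (fun r _ => hfib r)
      _ = p * p ^ n := by
          rw [Finset.sum_const, Finset.card_univ, ZMod.card, smul_eq_mul]
      _ = p ^ (n + 1) := by ring

/-- a finite subset `E ⊆ ℚ_p` satisfies `#E ≤ p^{#I_E}`. -/
theorem card_le_pow_card_pOrders
    (p : ℕ) [Fact p.Prime] (E : Set ℚ_[p]) (hE : E.Finite) :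
    E.ncard ≤ p ^ (pOrders p E).ncard := by
  exact main_aux p (pOrders p E).ncard E hE le_rfl
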